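/- Let α, β, α', β' ∈ F and λ, λ' ∈ F* with λ ≠ λ', Tr(αβ) = 1 and Tr(α'β') = 1. Set α⊕α' = (αλ + α'λ')/(λ + λ') and β⊕β' = (βλ + β'λ')/(λ + λ'). If Tr((α⊕α')(β⊕β')) = 1, then the three point sets F_{α,β,λ}, F_{α',β',λ'} and F_{α⊕α', β⊕β', λ+λ'} are pairwise disjoint. -/

import Mathlib

/-!
STATEMENT 0: Mathon's disjointness lemma.  Over `F = GF(2^h)`, if `Tr(αβ) = 1`,
`Tr(α'β') = 1` and `Tr((α⊕α')(β⊕β')) = 1` where `α⊕α' = (αλ+α'λ')/(λ+λ')`,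
`β⊕β' = (βλ+β'λ')/(λ+λ')`, then the conics `F_{α,β,λ}`, `F_{α',β',λ'}` and
`F_{α⊕α',β⊕β',λ+λ'}` are pairwise disjoint point sets in `PG(2,q)`.
-/

open Projectivization

noncomputable section

abbrev F (h : ℕ) : Type := GaloisField 2 h

/-- The absolute trace map from `GF(2^h)` onto `GF(2)`. -/
def Tr {h : ℕ} (x : F h) : ZMod 2 := Algebra.trace (ZMod 2) (F h) x

/-- Points of the Desarguesian projective plane `PG(2, 2^h)`. -/
abbrev Pt (h : ℕ) := Projectivization (F h) (Fin 3 → F h)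

/-- The point set of the conic `F_{α,β,λ} = {(x,y,z) : αx² + xy + βy² + λz² = 0}`.
(The defining condition is invariant under rescaling of a representative vector,
so testing it on the fixed representative `P.rep` is equivalent.) -/
def conic {h : ℕ} (α β lam : F h) : Set (Pt h) :=
  {P | α * P.rep 0 ^ 2 + P.rep 0 * P.rep 1 + β * P.rep 1 ^ 2 + lam * P.rep 2 ^ 2 = 0}


def frobAlg (h : ℕ) : F h ≃ₐ[ZMod 2] F h :=
  { frobeniusEquiv (F h) 2 with
    commutes' := fun r => by
      show frobenius (F h) 2 _ = _
      rw [frobenius_def, ← map_pow, ZMod.pow_card] }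

lemma Tr_sq {h : ℕ} (x : F h) : Tr (x ^ 2) = Tr x := by
  have := Algebra.trace_eq_of_algEquiv (frobAlg h) x
  simpa [Tr, frobAlg, frobeniusEquiv_def, frobenius_def] using this

lemma Tr_add {h : ℕ} (x y : F h) : Tr (x + y) = Tr x + Tr y := by
  simp [Tr, map_add]

lemma aniso {h : ℕ} {a b x y : F h} (hab : Tr (a * b) = 1)
    (hxy : a * x ^ 2 + x * y + b * y ^ 2 = 0) : x = 0 ∧ y = 0 := by
  have hab0 : a * b ≠ 0 := by
    intro h0; rw [h0] at hab; simp [Tr] at hab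
  have ha : a ≠ 0 := fun h0 => hab0 (by rw [h0, zero_mul])
  have hy : y = 0 := by
    by_contra hy
    set u := a * x / y with hu
    have huy : u * y = a * x := by
      rw [hu]; field_simp
    have h2 : u ^ 2 + u = a * b := by
      have e : (u ^ 2 + u) * y ^ 2 = (a * b) * y ^ 2 := by
        linear_combination (u * y + a * x + y) * huy + a * hxy -
          CharTwo.add_self_eq_zero (a * b * y ^ 2)
      exact mul_right_cancel₀ (pow_ne_zero 2 hy) e
    have : Tr (a * b) = 0 := by
      rw [← h2, Tr_add, Tr_sq, ← two_mul]
      have : (2 : ZMod 2) = 0 := by decide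
      rw [this, zero_mul]
    rw [hab] at this; exact one_ne_zero this
  refine ⟨?_, hy⟩
  rw [hy] at hxy
  have : a * x ^ 2 = 0 := by linear_combination hxy
  rcases mul_eq_zero.1 this with h' | h'
  · exact absurd h' ha
  · exact pow_eq_zero_iff (n := 2) (by norm_num) |>.1 h'

lemma key {h : ℕ} {A B a b μ c d ν : F h} (hAB : Tr (A * B) = 1)
    (hμ : μ ≠ 0) (hμν : μ + ν ≠ 0)
    (hA : ν * a + μ * c = (μ + ν) * A) (hB : ν * b + μ * d = (μ + ν) * B) :
    Disjoint (conic a b μ) (conic c d ν) := by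
  rw [Set.disjoint_left]
  intro P h1 h2
  simp only [conic, Set.mem_setOf_eq] at h1 h2
  set x := P.rep 0; set y := P.rep 1; set z := P.rep 2
  have hform : (μ + ν) * (A * x ^ 2 + x * y + B * y ^ 2) = 0 := by
    linear_combination ν * h1 + μ * h2 - x ^ 2 * hA - y ^ 2 * hB -
      CharTwo.add_self_eq_zero (μ * ν * z ^ 2)
  have hf : A * x ^ 2 + x * y + B * y ^ 2 = 0 :=
    (mul_eq_zero.1 hform).resolve_left hμν
  obtain ⟨hx, hy⟩ := aniso hAB hf
  have hz : z = 0 := by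
    rw [hx, hy] at h1
    simp only [mul_zero, zero_mul, ne_eq, OfNat.ofNat_ne_zero, not_false_iff,
      zero_pow, add_zero, zero_add] at h1
    rcases mul_eq_zero.1 h1 with h' | h'
    · exact absurd h' hμ
    · exact pow_eq_zero_iff (n := 2) (by norm_num) |>.1 h'
  exact P.rep_nonzero (by funext i; fin_cases i <;> assumption)

theorem stmt0 (h : ℕ) (hh : h ≠ 0) (α β α' β' lam lam' : F h)
    (hlam : lam ≠ 0) (hlam' : lam' ≠ 0) (hll : lam ≠ lam')
    (htr1 : Tr (α * β) = 1) (htr2 : Tr (α' * β') = 1)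
    (htr3 : Tr (((α * lam + α' * lam') / (lam + lam')) *
                ((β * lam + β' * lam') / (lam + lam'))) = 1) :
    Disjoint (conic α β lam) (conic α' β' lam') ∧
    Disjoint (conic α β lam)
      (conic ((α * lam + α' * lam') / (lam + lam'))
             ((β * lam + β' * lam') / (lam + lam')) (lam + lam')) ∧
    Disjoint (conic α' β' lam')
      (conic ((α * lam + α' * lam') / (lam + lam'))
             ((β * lam + β' * lam') / (lam + lam')) (lam + lam')) := by
  have hs : lam + lam' ≠ 0 := by
    intro h0
    apply hll
    rw [← CharTwo.neg_eq lam']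
    exact add_eq_zero_iff_eq_neg.mp h0
  set Aop := (α * lam + α' * lam') / (lam + lam') with hAopdef
  set Bop := (β * lam + β' * lam') / (lam + lam') with hBopdef
  set Ad := (α * lam' + α' * lam) / (lam + lam') with hAddef
  set Bd := (β * lam' + β' * lam) / (lam + lam') with hBddef
  have hAd : Ad * (lam + lam') = α * lam' + α' * lam := div_mul_cancel₀ _ hs
  have hBd : Bd * (lam + lam') = β * lam' + β' * lam := div_mul_cancel₀ _ hs
  have hAop : Aop * (lam + lam') = α * lam + α' * lam' := div_mul_cancel₀ _ hs
  have hBop : Bop * (lam + lam') = β * lam + β' * lam' := div_mul_cancel₀ _ hs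
  -- the trace of the derived form
  have hsum : Ad * Bd = α * β + α' * β' + Aop * Bop := by
    have e : (Ad * Bd) * (lam + lam') ^ 2
        = (α * β + α' * β' + Aop * Bop) * (lam + lam') ^ 2 := by
      linear_combination (Bd * (lam + lam')) * hAd + (α * lam' + α' * lam) * hBd -
        (Bop * (lam + lam')) * hAop - (α * lam + α' * lam') * hBop -
        CharTwo.add_self_eq_zero (lam * lam' * (α * β' + α' * β - α * β - α' * β')) +
        CharTwo.add_self_eq_zero (-2*α*lam*lam'*β + α*lam*lam'*β' - α*lam^2*β +
          lam*lam'*α'*β - 2*lam*lam'*α'*β' - lam'^2*α'*β')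
    exact mul_right_cancel₀ (pow_ne_zero 2 hs) e
  have htrd : Tr (Ad * Bd) = 1 := by
    rw [hsum, Tr_add, Tr_add, htr1, htr2, htr3]
    decide
  refine ⟨?_, ?_, ?_⟩
  · exact key htrd hlam hs
      (by linear_combination -hAd) (by linear_combination -hBd)
  · refine key htrd hlam ?_ ?_ ?_
    · intro h0
      apply hlam'
      linear_combination h0 - CharTwo.add_self_eq_zero lam
    · refine mul_right_cancel₀ hs ?_
      linear_combination lam * hAop - (lam + (lam + lam')) * hAd + CharTwo.add_self_eq_zero (lam^2*(α - α'))
    · refine mul_right_cancel₀ hs ?_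
      linear_combination lam * hBop - (lam + (lam + lam')) * hBd + CharTwo.add_self_eq_zero (lam^2*(β - β'))
  · refine key htrd hlam' ?_ ?_ ?_
    · intro h0
      apply hlam
      linear_combination h0 - CharTwo.add_self_eq_zero lam'
    · refine mul_right_cancel₀ hs ?_
      linear_combination lam' * hAop - (lam' + (lam + lam')) * hAd + CharTwo.add_self_eq_zero (lam'^2*(α' - α))
    · refine mul_right_cancel₀ hs ?_
      linear_combination lam' * hBop - (lam' + (lam + lam')) * hBd + CharTwo.add_self_eq_zero (lam'^2*(β' - β))
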